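/- Let G be a simple graph on a finite vertex set V and let α be a positive integer. Suppose the edge set of G is the union of the edge sets of α acyclic subgraphs (forests) of G. Then there exists a linear order ≺ on V such that every vertex u ∈ V has at most 2α − 1 neighbors v in G with u ≺ v. -/

import Mathlib

open SimpleGraph Finset

lemma forest_card_edge_le {V : Type*} [Fintype V] [Nonempty V] (G : SimpleGraph V)
    [Fintype G.edgeSet] (h : G.IsAcyclic) :
    G.edgeFinset.card + 1 ≤ Fintype.card V := by
  classical
  set root : V → V := fun v => (G.connectedComponentMk v).out with hroot
  have hmk : ∀ v, G.connectedComponentMk (root v) = G.connectedComponentMk v := by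
    intro v; exact Quot.out_eq _
  have hreach : ∀ v, G.Reachable v (root v) := fun v =>
    (ConnectedComponent.exact (hmk v)).symm
  have hidem : ∀ v, root (root v) = root v := by
    intro v
    show (G.connectedComponentMk (root v)).out = root v
    rw [hmk v]
  have hEU : ∀ v, ∃! q : G.Walk v (root v), q.IsPath := by
    intro v
    obtain ⟨w⟩ := hreach v
    exact ⟨w.toPath.1, w.toPath.2, fun q hq => Subtype.ext_iff.mp (h.path_unique ⟨q, hq⟩ w.toPath)⟩
  choose f hf hf' using hEU
  -- roots have the nil path
  have hnil : ∀ v (hv : v = root v), (f v).length = 0 := by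
    intro v hv
    have : f v = Walk.nil.copy rfl hv := (hf' v _ (by simp)).symm
    rw [this]; simp
  -- the map from non-root vertices to edges
  set g : V → Sym2 V := fun w =>
    if hw : w = root w then s(w, w) else ((f w).firstDart (Walk.not_nil_of_ne hw)).edge with hg
  have hsurj : ∀ e ∈ G.edgeFinset, ∃ w ∈ Finset.univ.filter (fun v => ¬ v = root v), g w = e := by
    intro e he
    rw [mem_edgeFinset] at he
    induction e with
    | _ x y =>
      have hxy : G.Adj x y := he
      clear he
      wlog hl : (f x).length ≤ (f y).length generalizing x y
      · obtain ⟨w, hw1, hw2⟩ := this y x hxy.symm (le_of_not_ge hl)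
        exact ⟨w, hw1, by rw [hw2, Sym2.eq_swap]⟩
      have hrr : root x = root y := by
        show (G.connectedComponentMk x).out = (G.connectedComponentMk y).out
        rw [ConnectedComponent.connectedComponentMk_eq_of_adj hxy]
      -- y is not a root
      have hyroot : ¬ y = root y := by
        intro hy
        have h0 : (f y).length = 0 := hnil y hy
        have hx1 : f x = (Walk.cons hxy Walk.nil).copy rfl (hrr.trans hy.symm).symm :=
          (hf' x _ (by simp [hxy.ne])).symm
        have : (f x).length = 1 := by rw [hx1]; simp
        omega
      -- y is not on the path from x
      have hysup : y ∉ (f x).support := by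
        intro hy
        have hd : f y = ((f x).dropUntil y hy).copy rfl hrr :=
          (hf' y _ (by simpa using (hf x).dropUntil hy)).symm
        have hlen : (f y).length = ((f x).dropUntil y hy).length := by rw [hd]; simp
        have hspec := (f x).take_spec hy
        have hlen2 : (f x).length
            = ((f x).takeUntil y hy).length + ((f x).dropUntil y hy).length := by
          conv_lhs => rw [← hspec]
          rw [Walk.length_append]
        have htpos : 0 < ((f x).takeUntil y hy).length := by
          rcases Nat.eq_zero_or_pos ((f x).takeUntil y hy).length with h0 | h0
          · exfalso
            have : ((f x).takeUntil y hy).Nil := Walk.nil_iff_length_eq.mpr h0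
            exact hxy.ne (this.eq)
          · exact h0
        omega
      have hfy : f y = (Walk.cons hxy.symm (f x)).copy rfl hrr :=
        (hf' y _ (by simp only [Walk.isPath_copy]; exact (hf x).cons hysup)).symm
      refine ⟨y, by simp [hyroot], ?_⟩
      have : g y = ((f y).firstDart (Walk.not_nil_of_ne hyroot)).edge := by
        rw [hg]; simp [hyroot]
      rw [this, Walk.edge_firstDart]
      have : (f y).getVert 1 = x := by
        rw [hfy, Walk.getVert_copy, Walk.getVert_cons_succ, Walk.getVert_zero]
      rw [show (f y).snd = x from this, Sym2.eq_swap]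
  have hcard : G.edgeFinset.card ≤ (Finset.univ.filter (fun v => ¬ v = root v)).card := by
    apply Finset.card_le_card_of_surjOn g
    intro e he
    obtain ⟨w, hw1, hw2⟩ := hsurj e (by simpa using he)
    exact ⟨w, by simpa using (Finset.mem_filter.mp hw1).2, hw2⟩
  have hsub : (Finset.univ.filter (fun v => ¬ v = root v)) ⊆
      Finset.univ.erase (root (Classical.arbitrary V)) := by
    intro v hv
    rw [Finset.mem_filter] at hv
    rw [Finset.mem_erase]
    refine ⟨?_, Finset.mem_univ _⟩
    intro hveq
    exact hv.2 (by rw [hveq, hidem])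
  have := Finset.card_le_card hsub
  rw [Finset.card_erase_of_mem (Finset.mem_univ _), Finset.card_univ] at this
  have hpos : 0 < Fintype.card V := Fintype.card_pos
  omega


lemma min_degree_in_subset {V : Type*} [Fintype V] [DecidableEq V] (G : SimpleGraph V)
    [DecidableRel G.Adj]
    (α : ℕ) (hα : 0 < α) (F : Fin α → SimpleGraph V)
    (hforest : ∀ i, (F i).IsAcyclic)
    (hcover : G.edgeSet = ⋃ i, (F i).edgeSet)
    (s : Finset V) (hs : s.Nonempty) :
    ∃ u ∈ s, (s.filter (G.Adj u)).card + 1 ≤ 2 * α := by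
  classical
  by_contra hcon
  push_neg at hcon
  have hdeg : ∀ u ∈ s, 2 * α ≤ (s.filter (G.Adj u)).card := by
    intro u hu; have := hcon u hu; omega
  haveI : Nonempty ↥s := hs.to_subtype
  set H : SimpleGraph ↥s := G.comap (Subtype.val) with hH
  set Hi : Fin α → SimpleGraph ↥s := fun i => (F i).comap (Subtype.val) with hHi
  -- each Hi is acyclic
  have hHiacyc : ∀ i, (Hi i).IsAcyclic := by
    intro i v c hc
    have : ((c.map ⟨Subtype.val, fun h => h⟩)).IsCycle := hc.map Subtype.val_injective
    exact hforest i _ this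
  -- edge bound on each Hi
  have hEi : ∀ i, (Hi i).edgeFinset.card + 1 ≤ s.card := by
    intro i
    have := forest_card_edge_le (Hi i) (hHiacyc i)
    simpa [Fintype.card_coe] using this
  -- edges of H covered
  have hHcov : H.edgeFinset ⊆ Finset.univ.biUnion (fun i => (Hi i).edgeFinset) := by
    intro e he
    rw [mem_edgeFinset] at he
    induction e with
    | _ a b =>
      have hab : G.Adj ↑a ↑b := he
      have : s(↑a, ↑b) ∈ G.edgeSet := hab
      rw [hcover] at this
      obtain ⟨_, ⟨i, rfl⟩, hi⟩ := this
      simp only [Finset.mem_biUnion]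
      exact ⟨i, Finset.mem_univ i, by rwa [mem_edgeFinset]⟩
  have hE : H.edgeFinset.card ≤ α * (s.card - 1) := by
    calc H.edgeFinset.card ≤ (Finset.univ.biUnion (fun i => (Hi i).edgeFinset)).card :=
        Finset.card_le_card hHcov
    _ ≤ ∑ i : Fin α, (Hi i).edgeFinset.card := Finset.card_biUnion_le
    _ ≤ ∑ _i : Fin α, (s.card - 1) := by
        apply Finset.sum_le_sum; intro i _; have := hEi i
        have h1 : 0 < s.card := Finset.card_pos.mpr hs
        omega
    _ = α * (s.card - 1) := by simp [Finset.sum_const, Finset.card_univ, mul_comm]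
  -- degrees
  have hdegH : ∀ v : ↥s, H.degree v = (s.filter (G.Adj ↑v)).card := by
    intro v
    rw [← card_neighborFinset_eq_degree, neighborFinset_eq_filter]
    refine Finset.card_bij (fun (w : ↥s) (_ : w ∈ Finset.univ.filter (fun w => H.Adj v w)) => (w : V)) ?_ ?_ ?_
    · intro w hw
      rw [Finset.mem_filter] at hw ⊢
      exact ⟨w.2, hw.2⟩
    · intro a _ b _ hab; exact Subtype.ext hab
    · intro w hw
      rw [Finset.mem_filter] at hw
      exact ⟨⟨w, hw.1⟩, Finset.mem_filter.mpr ⟨Finset.mem_univ _, hw.2⟩, rfl⟩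
  have hsum : ∑ v : ↥s, H.degree v = 2 * H.edgeFinset.card :=
    H.sum_degrees_eq_twice_card_edges
  have hlow : s.card * (2 * α) ≤ ∑ v : ↥s, H.degree v := by
    have : ∀ v : ↥s, 2 * α ≤ H.degree v := by
      intro v; rw [hdegH]; exact hdeg ↑v v.2
    calc s.card * (2 * α) = ∑ _v : ↥s, 2 * α := by
          simp [Finset.sum_const, Finset.card_univ, Fintype.card_coe]
    _ ≤ ∑ v : ↥s, H.degree v := Finset.sum_le_sum (fun v _ => this v)
  -- contradiction
  have h1 : 0 < s.card := Finset.card_pos.mpr hs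
  have key : s.card * (2 * α) ≤ 2 * (α * (s.card - 1)) := by
    rw [hsum] at hlow; omega
  have hlt : α * (s.card - 1) < α * s.card :=
    mul_lt_mul_of_pos_left (Nat.sub_lt h1 one_pos) hα
  have : s.card * (2 * α) = 2 * (α * s.card) := by ring
  omega

lemma degeneracy_rank {V : Type*} [Fintype V] [DecidableEq V] (G : SimpleGraph V)
    [DecidableRel G.Adj] (d : ℕ)
    (hmin : ∀ s : Finset V, s.Nonempty → ∃ u ∈ s, (s.filter (G.Adj u)).card + 1 ≤ d) :
    ∀ (n : ℕ) (s : Finset V), s.card = n →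
      ∃ ρ : V → ℕ, Set.InjOn ρ ↑s ∧
        ∀ u ∈ s, (s.filter (fun v => G.Adj u v ∧ ρ u < ρ v)).card + 1 ≤ d := by
  intro n
  induction n with
  | zero =>
    intro s hs
    refine ⟨fun _ => 0, ?_, ?_⟩
    · rw [Finset.card_eq_zero.mp hs]; simp [Set.InjOn]
    · intro u hu; rw [Finset.card_eq_zero.mp hs] at hu; simp at hu
  | succ n ih =>
    intro s hs
    have hne : s.Nonempty := Finset.card_pos.mp (by omega)
    obtain ⟨u, hu, hdu⟩ := hmin s hne
    obtain ⟨ρ', hinj', hb'⟩ := ih (s.erase u) (by rw [Finset.card_erase_of_mem hu, hs]; rfl)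
    refine ⟨fun v => if v = u then 0 else ρ' v + 1, ?_, ?_⟩
    · intro a ha b hb hab
      simp only at hab
      by_cases hau : a = u <;> by_cases hbu : b = u
      · rw [hau, hbu]
      · simp [hau, hbu] at hab
      · simp [hau, hbu] at hab
      · simp only [if_neg hau, if_neg hbu, add_left_inj] at hab
        exact hinj' (Finset.mem_coe.mpr (Finset.mem_erase.mpr ⟨hau, ha⟩))
          (Finset.mem_coe.mpr (Finset.mem_erase.mpr ⟨hbu, hb⟩)) hab
    · intro w hw
      beta_reduce
      by_cases hwu : w = u
      · have hsub : s.filter (fun v => G.Adj w v ∧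
            (if w = u then 0 else ρ' w + 1) < (if v = u then 0 else ρ' v + 1))
            ⊆ s.filter (G.Adj w) := by
          intro v hv
          rw [Finset.mem_filter] at hv ⊢
          exact ⟨hv.1, hv.2.1⟩
        have h2 := Finset.card_le_card hsub
        have h3 : (s.filter (G.Adj w)).card + 1 ≤ d := by rw [hwu]; exact hdu
        exact le_trans (Nat.add_le_add_right h2 1) h3
      · have hw' : w ∈ s.erase u := Finset.mem_erase.mpr ⟨hwu, hw⟩
        have heq : s.filter (fun v => G.Adj w v ∧
            (if w = u then 0 else ρ' w + 1) < (if v = u then 0 else ρ' v + 1))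
            = (s.erase u).filter (fun v => G.Adj w v ∧ ρ' w < ρ' v) := by
          ext v
          simp only [Finset.mem_filter, Finset.mem_erase, if_neg hwu]
          by_cases hvu : v = u
          · simp [hvu]
          · simp only [if_neg hvu, add_lt_add_iff_right]
            tauto
        rw [heq]
        exact hb' w hw'

theorem arboricity_degeneracy_order {V : Type*} [Fintype V] (G : SimpleGraph V)
    (α : ℕ) (hα : 0 < α) (F : Fin α → SimpleGraph V)
    (hsub : ∀ i, F i ≤ G) (hforest : ∀ i, (F i).IsAcyclic)
    (hcover : G.edgeSet = ⋃ i, (F i).edgeSet) :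
    ∃ r : V → V → Prop, IsStrictTotalOrder V r ∧
      ∀ u : V, {v : V | G.Adj u v ∧ r u v}.ncard ≤ 2 * α - 1 := by
  classical
  obtain ⟨ρ, hinj, hb⟩ := degeneracy_rank G (2 * α)
    (min_degree_in_subset G α hα F hforest hcover)
    (Fintype.card V) Finset.univ (by simp)
  have hinj' : Function.Injective ρ := fun a b h =>
    hinj (by simp) (by simp) h
  refine ⟨fun u v => ρ u < ρ v, ?_, ?_⟩
  · haveI h1 : IsTrichotomous V (fun u v => ρ u < ρ v) := ⟨fun a b => by
      rcases lt_trichotomy (ρ a) (ρ b) with h | h | h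
      · intro h'; exact absurd h h'
      · intro _ _; exact hinj' h
      · intro _ h'; exact absurd h h'⟩
    haveI h2 : IsIrrefl V (fun u v => ρ u < ρ v) := ⟨fun a => lt_irrefl _⟩
    haveI h3 : IsTrans V (fun u v => ρ u < ρ v) := ⟨fun a b c hab hbc => lt_trans hab hbc⟩
    haveI h4 : IsStrictOrder V (fun u v => ρ u < ρ v) := ⟨⟩
    exact ⟨⟩
  · intro u
    have : {v : V | G.Adj u v ∧ ρ u < ρ v}
        = ↑(Finset.univ.filter (fun v => G.Adj u v ∧ ρ u < ρ v)) := by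
      ext v; simp
    rw [this, Set.ncard_coe_finset]
    have := hb u (Finset.mem_univ u)
    omega
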